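/- Let (X, ℬ, μ, T) be a conservative, ergodic, measure-preserving transformation of a σ-finite measure space, and let f, g ∈ L¹(X, μ) with f > 0 and g > 0 μ-almost everywhere. Then the common value of liminf_{n→∞} S_n f / S_n g and limsup_{n→∞} S_n f / S_n g is μ-almost everywhere equal to the constant (∫_X f dμ)/(∫_X g dμ); in particular liminf_{n→∞} S_n f / S_n g ≥ (∫_X f dμ)/(∫_X g dμ) ≥ limsup_{n→∞} S_n f / S_n g μ-almost everywhere. -/

import Mathlib

open MeasureTheory Filter Topology

set_option linter.unusedSectionVars false
set_option linter.unusedVariables false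

/-- `T` is conservative w.r.t. `μ`: every set of positive measure returns to itself. -/
def IsConservative {X : Type*} [MeasurableSpace X] (T : X → X) (μ : Measure X) : Prop :=
  ∀ A : Set X, MeasurableSet A → 0 < μ A → ∃ n ≥ 1, 0 < μ (A ∩ (T^[n]) ⁻¹' A)

/-- Birkhoff sum `S_n f = ∑_{k<n} f ∘ T^k`. -/
noncomputable def birkhoff {X : Type*} (T : X → X) (f : X → ℝ) (n : ℕ) (x : X) : ℝ :=
  ∑ k ∈ Finset.range n, f (T^[k] x)

section Aux

variable {X : Type*} [MeasurableSpace X] {μ : Measure X} {T : X → X}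

lemma birkhoff_zero (h : X → ℝ) (x : X) : birkhoff T h 0 x = 0 := by simp [birkhoff]

lemma birkhoff_one (h : X → ℝ) (x : X) : birkhoff T h 1 x = h x := by simp [birkhoff]

lemma birkhoff_succ (h : X → ℝ) (n : ℕ) (x : X) :
    birkhoff T h (n + 1) x = birkhoff T h n x + h (T^[n] x) := by
  simp [birkhoff, Finset.sum_range_succ]

lemma birkhoff_succ' (h : X → ℝ) (n : ℕ) (x : X) :
    birkhoff T h (n + 1) x = h x + birkhoff T h n (T x) := by
  simp only [birkhoff, Finset.sum_range_succ']
  simp [Function.iterate_succ_apply, add_comm]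

lemma birkhoff_measurable (hT : Measurable T) {h : X → ℝ} (hm : Measurable h) (n : ℕ) :
    Measurable (birkhoff T h n) := by
  apply Finset.measurable_sum
  exact fun k _ => hm.comp (hT.iterate k)

lemma birkhoff_integrable (hT : MeasurePreserving T μ μ) {h : X → ℝ} (hi : Integrable h μ)
    (n : ℕ) : Integrable (birkhoff T h n) μ := by
  apply integrable_finset_sum
  intro k _
  exact ((hT.iterate k).integrable_comp hi.aestronglyMeasurable).mpr hi

lemma birkhoff_nonneg {h : X → ℝ} (hpos : ∀ y, 0 ≤ h y) (n : ℕ) (x : X) :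
    0 ≤ birkhoff T h n x :=
  Finset.sum_nonneg fun k _ => hpos _

lemma birkhoff_pos {h : X → ℝ} (hpos : ∀ y, 0 < h y) {n : ℕ} (hn : 1 ≤ n) (x : X) :
    0 < birkhoff T h n x := by
  exact Finset.sum_pos (fun k _ => hpos _) (Finset.nonempty_range_iff.mpr (by omega))

lemma birkhoff_mono {h : X → ℝ} (hpos : ∀ y, 0 ≤ h y) (x : X) :
    Monotone (fun n => birkhoff T h n x) := by
  apply monotone_nat_of_le_succ
  intro n
  rw [birkhoff_succ]
  have := hpos (T^[n] x)
  linarith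

lemma birkhoff_sub (h₁ h₂ : X → ℝ) (n : ℕ) (x : X) :
    birkhoff T (fun y => h₁ y - h₂ y) n x = birkhoff T h₁ n x - birkhoff T h₂ n x := by
  simp [birkhoff, Finset.sum_sub_distrib]

lemma birkhoff_const_mul (c : ℝ) (h : X → ℝ) (n : ℕ) (x : X) :
    birkhoff T (fun y => c * h y) n x = c * birkhoff T h n x := by
  simp [birkhoff, Finset.mul_sum]

/-- auxiliary maxima of Birkhoff sums: `psi T h N x = max_{1 ≤ n ≤ N+1} S_n h x`. -/
noncomputable def psi (T : X → X) (h : X → ℝ) : ℕ → X → ℝ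
  | 0 => fun x => h x
  | (N + 1) => fun x => max (psi T h N x) (birkhoff T h (N + 2) x)

lemma psi_mono_succ (h : X → ℝ) (N : ℕ) (x : X) : psi T h N x ≤ psi T h (N + 1) x :=
  le_max_left _ _

lemma psi_succ (h : X → ℝ) (N : ℕ) (x : X) :
    psi T h (N + 1) x = h x + max 0 (psi T h N (T x)) := by
  induction N generalizing x with
  | zero =>
      show max (psi T h 0 x) (birkhoff T h 2 x) = _
      have h2 : birkhoff T h 2 x = h x + birkhoff T h 1 (T x) := birkhoff_succ' h 1 x
      rw [birkhoff_one] at h2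
      show max (h x) (birkhoff T h 2 x) = h x + max 0 (h (T x))
      rw [h2, ← max_add_add_left, add_zero]
  | succ M ih =>
      show max (psi T h (M + 1) x) (birkhoff T h (M + 3) x) = h x + max 0 (psi T h (M + 1) (T x))
      rw [ih x, birkhoff_succ' h (M + 2) x, max_add_add_left, max_assoc]
      rfl

lemma birkhoff_le_psi (h : X → ℝ) (N : ℕ) (x : X) :
    birkhoff T h (N + 1) x ≤ psi T h N x := by
  induction N with
  | zero => simp [psi, birkhoff_one]
  | succ M _ => exact le_max_right _ _

lemma psi_pos_exists (h : X → ℝ) {N : ℕ} {x : X} (hx : 0 < psi T h N x) :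
    ∃ n, 1 ≤ n ∧ 0 < birkhoff T h n x := by
  induction N with
  | zero => exact ⟨1, le_refl _, by rwa [birkhoff_one]⟩
  | succ M ih =>
      rcases lt_max_iff.mp hx with h1 | h2
      · exact ih h1
      · exact ⟨M + 2, by omega, h2⟩

lemma psi_measurable (hT : Measurable T) {h : X → ℝ} (hm : Measurable h) (N : ℕ) :
    Measurable (psi T h N) := by
  induction N with
  | zero => exact hm
  | succ M ih => exact ih.max (birkhoff_measurable hT hm _)

lemma psi_integrable (hT : MeasurePreserving T μ μ) {h : X → ℝ} (hi : Integrable h μ) (N : ℕ) :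
    Integrable (psi T h N) μ := by
  induction N with
  | zero => exact hi
  | succ M ih =>
      have := ih.sup (birkhoff_integrable hT hi (M + 2))
      exact this

end Aux
section Maximal

variable {X : Type*} [MeasurableSpace X] {μ : Measure X} {T : X → X}

/-- Hopf's maximal ergodic lemma. -/
lemma maximal_ergodic (hT : MeasurePreserving T μ μ) {h : X → ℝ} (hm : Measurable h)
    (hi : Integrable h μ) :
    0 ≤ ∫ x in {x | ∃ n, 1 ≤ n ∧ 0 < birkhoff T h n x}, h x ∂μ := by
  have hTm : Measurable T := hT.measurable
  set E : ℕ → Set X := fun N => {x | 0 < psi T h N x} with hE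
  have hEmeas : ∀ N, MeasurableSet (E N) :=
    fun N => measurableSet_lt measurable_const (psi_measurable hTm hm N)
  have hEmono : Monotone E := by
    apply monotone_nat_of_le_succ
    intro N x hx
    exact lt_of_lt_of_le hx (psi_mono_succ h N x)
  -- Φ N = max 0 (psi N)
  set Φ : ℕ → X → ℝ := fun N x => max 0 (psi T h N x) with hΦ
  have hΦmeas : ∀ N, Measurable (Φ N) := fun N => measurable_const.max (psi_measurable hTm hm N)
  have hΦint : ∀ N, Integrable (Φ N) μ := by
    intro N
    exact ((psi_integrable hT hi N).pos_part).congr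
      (Filter.Eventually.of_forall fun x => max_comm _ _)
  have hΦTint : ∀ N, Integrable (fun x => Φ N (T x)) μ :=
    fun N => (hT.integrable_comp (hΦmeas N).aestronglyMeasurable).mpr (hΦint N)
  have hΦnonneg : ∀ N x, 0 ≤ Φ N x := fun N x => le_max_left _ _
  -- pointwise key inequality
  have key : ∀ N x, Φ N x - Φ N (T x) ≤ Set.indicator (E N) h x := by
    intro N x
    by_cases hx : 0 < psi T h N x
    · rw [Set.indicator_of_mem (show x ∈ E N from hx) h]
      have hΦx : Φ N x = psi T h N x := max_eq_right hx.le
      rw [hΦx]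
      cases N with
      | zero =>
          have : psi T h 0 x = h x := rfl
          rw [this]
          have := hΦnonneg 0 (T x)
          linarith
      | succ M =>
          rw [psi_succ h M x]
          have hmono : max 0 (psi T h M (T x)) ≤ Φ (M + 1) (T x) :=
            max_le_max (le_refl 0) (psi_mono_succ h M (T x))
          linarith
    · rw [Set.indicator_of_notMem (show x ∉ E N from hx) h]
      have hΦx : Φ N x = 0 := max_eq_left (not_lt.mp hx)
      rw [hΦx]
      have := hΦnonneg N (T x)
      linarith
  -- integrate
  have hEN : ∀ N, 0 ≤ ∫ x in E N, h x ∂μ := by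
    intro N
    have hint_ind : Integrable (fun x => Set.indicator (E N) h x) μ := by
      simpa using hi.indicator (hEmeas N)
    have h1 : ∫ x, (Φ N x - Φ N (T x)) ∂μ ≤ ∫ x, Set.indicator (E N) h x ∂μ :=
      integral_mono ((hΦint N).sub (hΦTint N)) hint_ind (fun x => key N x)
    have h2 : ∫ x, (Φ N x - Φ N (T x)) ∂μ = 0 := by
      rw [integral_sub (hΦint N) (hΦTint N)]
      have : ∫ x, Φ N (T x) ∂μ = ∫ x, Φ N x ∂μ := by
        have h4 := integral_map (μ := μ) hTm.aemeasurable
          ((hΦmeas N).aestronglyMeasurable (μ := Measure.map T μ))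
        rw [hT.map_eq] at h4
        exact h4.symm
      rw [this, sub_self]
    have h3 : ∫ x, Set.indicator (E N) h x ∂μ = ∫ x in E N, h x ∂μ :=
      integral_indicator (hEmeas N)
    linarith
  -- union
  have hunion : (⋃ N, E N) = {x | ∃ n, 1 ≤ n ∧ 0 < birkhoff T h n x} := by
    ext x
    simp only [Set.mem_iUnion, Set.mem_setOf_eq, hE]
    constructor
    · rintro ⟨N, hN⟩
      exact psi_pos_exists h hN
    · rintro ⟨n, hn1, hnpos⟩
      obtain ⟨m, rfl⟩ : ∃ m, n = m + 1 := ⟨n - 1, by omega⟩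
      exact ⟨m, lt_of_lt_of_le hnpos (birkhoff_le_psi h m x)⟩
  have htend := tendsto_setIntegral_of_monotone hEmeas hEmono (hi.integrableOn)
  have : 0 ≤ ∫ x in ⋃ N, E N, h x ∂μ := ge_of_tendsto' htend hEN
  rwa [hunion] at this

end Maximal
open scoped symmDiff

section Invariant

variable {X : Type*} [MeasurableSpace X] {μ : Measure X} {T : X → X}

lemma ae_invariant_zero_or_compl (hT : MeasurePreserving T μ μ)
    (herg : ∀ A : Set X, MeasurableSet A → T ⁻¹' A = A → μ A = 0 ∨ μ Aᶜ = 0)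
    {S : Set X} (hSm : MeasurableSet S) (hae : μ ((T ⁻¹' S) ∆ S) = 0) :
    μ S = 0 ∨ μ Sᶜ = 0 := by
  have hTm : Measurable T := hT.measurable
  -- iterated preimages agree with S a.e.
  have hiter : ∀ n : ℕ, μ (((T^[n]) ⁻¹' S) ∆ S) = 0 := by
    intro n
    induction n with
    | zero => simp
    | succ m ih =>
        have h1 : ((T^[m+1]) ⁻¹' S) ∆ S ⊆ (((T^[m+1]) ⁻¹' S) ∆ ((T^[m]) ⁻¹' S)) ∪ (((T^[m]) ⁻¹' S) ∆ S) :=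
          symmDiff_triangle _ _ _
        have h2 : ((T^[m+1]) ⁻¹' S) ∆ ((T^[m]) ⁻¹' S) = (T^[m]) ⁻¹' ((T ⁻¹' S) ∆ S) := by
          rw [Set.preimage_symmDiff]
          congr 1
          rw [Function.iterate_succ', Set.preimage_comp]
        have h3 : μ (((T^[m+1]) ⁻¹' S) ∆ ((T^[m]) ⁻¹' S)) = 0 := by
          rw [h2, (hT.iterate m).measure_preimage]
          · exact hae
          · exact ((hTm hSm).symmDiff hSm).nullMeasurableSet
        exact measure_mono_null h1 (by rw [measure_union_null_iff]; exact ⟨h3, ih⟩)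
  set U : ℕ → Set X := fun N => ⋃ n, ⋃ (_ : N ≤ n), (T^[n]) ⁻¹' S with hU
  have hUm : ∀ N, MeasurableSet (U N) :=
    fun N => MeasurableSet.iUnion fun n => MeasurableSet.iUnion fun _ => (hTm.iterate n) hSm
  have hUae : ∀ N, μ (U N ∆ S) = 0 := by
    intro N
    have hsub : U N ∆ S ⊆ ⋃ n, (((T^[n]) ⁻¹' S) ∆ S) := by
      intro x hx
      rcases Set.mem_symmDiff.mp hx with ⟨hxU, hxS⟩ | ⟨hxS, hxU⟩
      · simp only [hU, Set.mem_iUnion] at hxU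
        obtain ⟨n, _, hn⟩ := hxU
        exact Set.mem_iUnion.mpr ⟨n, Set.mem_symmDiff.mpr (Or.inl ⟨hn, hxS⟩)⟩
      · refine Set.mem_iUnion.mpr ⟨N, Set.mem_symmDiff.mpr (Or.inr ⟨hxS, ?_⟩)⟩
        intro hmem
        exact hxU (Set.mem_iUnion.mpr ⟨N, Set.mem_iUnion.mpr ⟨le_refl N, hmem⟩⟩)
    exact measure_mono_null hsub (measure_iUnion_null_iff.mpr hiter)
  set S' : Set X := ⋂ N, U N with hS'
  have hS'm : MeasurableSet S' := MeasurableSet.iInter hUm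
  have hS'ae : μ (S' ∆ S) = 0 := by
    have hsub : S' ∆ S ⊆ ⋃ N, (U N ∆ S) := by
      intro x hx
      rcases Set.mem_symmDiff.mp hx with ⟨hxS', hxS⟩ | ⟨hxS, hxS'⟩
      · exact Set.mem_iUnion.mpr ⟨0, Set.mem_symmDiff.mpr
          (Or.inl ⟨Set.mem_iInter.mp hxS' 0, hxS⟩)⟩
      · simp only [hS', Set.mem_iInter] at hxS'
        push_neg at hxS'
        obtain ⟨N, hN⟩ := hxS'
        exact Set.mem_iUnion.mpr ⟨N, Set.mem_symmDiff.mpr (Or.inr ⟨hxS, hN⟩)⟩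
    exact measure_mono_null hsub (measure_iUnion_null_iff.mpr hUae)
  have hinv : T ⁻¹' S' = S' := by
    ext x
    simp only [hS', hU, Set.mem_preimage, Set.mem_iInter, Set.mem_iUnion]
    constructor
    · intro hx N
      obtain ⟨n, hn, hmem⟩ := hx N
      exact ⟨n + 1, by omega, by rwa [Function.iterate_succ_apply]⟩
    · intro hx N
      obtain ⟨n, hn, hmem⟩ := hx (N + 1)
      obtain ⟨m, rfl⟩ : ∃ m, n = m + 1 := ⟨n - 1, by omega⟩
      exact ⟨m, by omega, by rwa [Function.iterate_succ_apply] at hmem⟩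
  have heq : S' =ᵐ[μ] S := measure_symmDiff_eq_zero_iff.mp hS'ae
  rcases herg S' hS'm hinv with h | h
  · left; rw [← measure_congr heq]; exact h
  · right; rw [← measure_congr heq.compl]; exact h

end Invariant
section Divergence

variable {X : Type*} [MeasurableSpace X] {μ : Measure X} {T : X → X}

lemma birkhoff_tendsto_atTop (hT : MeasurePreserving T μ μ) (hcons : IsConservative T μ)
    (herg : ∀ A : Set X, MeasurableSet A → T ⁻¹' A = A → μ A = 0 ∨ μ Aᶜ = 0)
    {g : X → ℝ} (hgm : Measurable g) (hgi : Integrable g μ) (hgpos : ∀ y, 0 < g y)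
    (hμ : μ ≠ 0) :
    ∀ᵐ x ∂μ, Tendsto (fun n => birkhoff T g n x) atTop atTop := by
  have hTm : Measurable T := hT.measurable
  set A : Set X := ⋃ M : ℕ, ⋂ n : ℕ, {x | birkhoff T g n x ≤ (M : ℝ)} with hA
  have hAmem : ∀ x, x ∈ A ↔ ∃ M : ℕ, ∀ n, birkhoff T g n x ≤ (M : ℝ) := by
    intro x; simp [hA]
  have hAmeas : MeasurableSet A :=
    MeasurableSet.iUnion fun M => MeasurableSet.iInter fun n =>
      measurableSet_le (birkhoff_measurable hTm hgm n) measurable_const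
  have hAinv : T ⁻¹' A = A := by
    ext x
    rw [Set.mem_preimage, hAmem, hAmem]
    constructor
    · rintro ⟨M, hM⟩
      refine ⟨⌈g x⌉₊ + M, fun n => ?_⟩
      cases n with
      | zero => rw [birkhoff_zero]; positivity
      | succ m =>
          rw [birkhoff_succ']
          have h1 := hM m
          have h2 : g x ≤ (⌈g x⌉₊ : ℝ) := Nat.le_ceil _
          push_cast
          linarith
    · rintro ⟨M, hM⟩
      refine ⟨M, fun n => ?_⟩
      have h1 := hM (n + 1)
      rw [birkhoff_succ'] at h1
      have := hgpos x
      linarith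
  rcases herg A hAmeas hAinv with hA0 | hAc
  · -- sums are a.e. unbounded, hence tend to infinity by monotonicity
    have : ∀ᵐ x ∂μ, x ∉ A := by
      rw [ae_iff]; simpa using hA0
    filter_upwards [this] with x hx
    apply tendsto_atTop_atTop_of_monotone (birkhoff_mono (fun y => (hgpos y).le) x)
    intro b
    rw [hAmem] at hx
    push_neg at hx
    obtain ⟨n, hn⟩ := hx ⌈b⌉₊
    exact ⟨n, le_trans (Nat.le_ceil b) hn.le⟩
  · -- impossible: conservativity forces unbounded sums on a positive measure set
    exfalso
    -- find a set B = {ε < g} of positive measure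
    obtain ⟨m, hm⟩ : ∃ m : ℕ, μ {x | 1 / (m + 1 : ℝ) < g x} ≠ 0 := by
      by_contra hcon
      push_neg at hcon
      have huniv : (⋃ m : ℕ, {x | 1 / (m + 1 : ℝ) < g x}) = Set.univ := by
        ext x
        simp only [Set.mem_iUnion, Set.mem_setOf_eq, Set.mem_univ, iff_true]
        exact exists_nat_one_div_lt (hgpos x)
      have : μ Set.univ = 0 := by
        rw [← huniv]
        exact measure_iUnion_null_iff.mpr hcon
      exact hμ (Measure.measure_univ_eq_zero.mp this)
    set ε : ℝ := 1 / (m + 1 : ℝ) with hε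
    have hεpos : 0 < ε := by positivity
    set B : Set X := {x | ε < g x} with hB
    have hBmeas : MeasurableSet B := measurableSet_lt measurable_const hgm
    -- points of B that never return to B form a null set
    set W : Set X := B ∩ ⋂ n : ℕ, ⋂ (_ : 1 ≤ n), (T^[n]) ⁻¹' Bᶜ with hW
    have hWmeas : MeasurableSet W :=
      hBmeas.inter (MeasurableSet.iInter fun n => MeasurableSet.iInter fun _ =>
        (hTm.iterate n) hBmeas.compl)
    have hW0 : μ W = 0 := by
      by_contra hW0
      obtain ⟨n, hn1, hnpos⟩ := hcons W hWmeas (pos_iff_ne_zero.mpr hW0)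
      obtain ⟨x, hx⟩ := nonempty_of_measure_ne_zero hnpos.ne'
      have hxW : x ∈ W := hx.1
      have hTnW : T^[n] x ∈ W := hx.2
      have : T^[n] x ∈ Bᶜ := by
        have := hxW.2
        simp only [Set.mem_iInter] at this
        exact this n hn1
      exact this hTnW.1
    -- points of B that visit B only finitely often form a null set
    have hBadsub : B ∩ {x | ¬ ∀ N : ℕ, ∃ n, N ≤ n ∧ T^[n] x ∈ B} ⊆ ⋃ k : ℕ, (T^[k]) ⁻¹' W := by
      rintro x ⟨hxB, hxbad⟩
      push_neg at hxbad
      obtain ⟨N, hN⟩ := hxbad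
      classical
      have hN1 : 1 ≤ N := by
        by_contra hN1
        push_neg at hN1
        interval_cases N
        exact hN 0 (le_refl 0) (by simpa using hxB)
      set F : Finset ℕ := (Finset.range N).filter (fun k => T^[k] x ∈ B) with hF
      have hF0 : 0 ∈ F := by
        simp only [hF, Finset.mem_filter, Finset.mem_range]
        exact ⟨by omega, by simpa using hxB⟩
      have hFne : F.Nonempty := ⟨0, hF0⟩
      set k₀ : ℕ := F.max' hFne with hk₀
      have hk₀mem : k₀ ∈ F := F.max'_mem hFne
      have hk₀B : T^[k₀] x ∈ B := (Finset.mem_filter.mp hk₀mem).2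
      have hk₀lt : k₀ < N := Finset.mem_range.mp (Finset.mem_filter.mp hk₀mem).1
      refine Set.mem_iUnion.mpr ⟨k₀, ?_⟩
      rw [Set.mem_preimage, hW]
      refine ⟨hk₀B, ?_⟩
      simp only [Set.mem_iInter]
      intro j hj
      rw [Set.mem_preimage, ← Function.iterate_add_apply]
      by_cases hjk : j + k₀ < N
      · intro hmem
        have hjF : j + k₀ ∈ F := by
          simp only [hF, Finset.mem_filter, Finset.mem_range]
          exact ⟨hjk, hmem⟩
        have := Finset.le_max' F _ hjF
        omega
      · push_neg at hjk
        exact fun hmem => hN _ hjk hmem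
    have hBad0 : μ (B ∩ {x | ¬ ∀ N : ℕ, ∃ n, N ≤ n ∧ T^[n] x ∈ B}) = 0 := by
      apply measure_mono_null hBadsub
      apply measure_iUnion_null_iff.mpr
      intro k
      rw [(hT.iterate k).measure_preimage hWmeas.nullMeasurableSet]
      exact hW0
    -- on B, recurrent points have unbounded sums, so B ∩ A ⊆ Bad
    have hBA : B ∩ A ⊆ B ∩ {x | ¬ ∀ N : ℕ, ∃ n, N ≤ n ∧ T^[n] x ∈ B} := by
      rintro x ⟨hxB, hxA⟩
      refine ⟨hxB, ?_⟩
      intro hrec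
      rw [hAmem] at hxA
      obtain ⟨M, hM⟩ := hxA
      -- sums grow by at least ε at each visit
      have hgrow : ∀ k : ℕ, ∃ n, (k : ℝ) * ε ≤ birkhoff T g n x := by
        intro k
        induction k with
        | zero => exact ⟨0, by rw [birkhoff_zero]; simp⟩
        | succ j ih =>
            obtain ⟨n, hn⟩ := ih
            obtain ⟨p, hpn, hpB⟩ := hrec n
            refine ⟨p + 1, ?_⟩
            rw [birkhoff_succ]
            have h1 : birkhoff T g n x ≤ birkhoff T g p x :=
              birkhoff_mono (fun y => (hgpos y).le) x hpn
            have h2 : ε < g (T^[p] x) := hpB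
            push_cast
            linarith
        -- pick k with k ε > M
      obtain ⟨k, hk⟩ := exists_nat_gt ((M : ℝ) / ε)
      obtain ⟨n, hn⟩ := hgrow k
      have : (M : ℝ) < (k : ℝ) * ε := by
        rw [div_lt_iff₀ hεpos] at hk
        linarith
      have := hM n
      linarith
    have hB0 : μ B = 0 := by
      have h1 : μ (B ∩ A) = 0 := measure_mono_null hBA hBad0
      have h2 : μ (B ∩ Aᶜ) = 0 := measure_mono_null Set.inter_subset_right hAc
      have : B = (B ∩ A) ∪ (B ∩ Aᶜ) := by rw [Set.inter_union_compl]
      rw [this]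
      exact measure_union_null h1 h2
    exact hm hB0

end Divergence
section Ratio

lemma EReal_le_coe_of_forall {x : EReal} {c : ℝ} (h : ∀ ε : ℝ, 0 < ε → x ≤ ((c + ε : ℝ) : EReal)) :
    x ≤ (c : EReal) := by
  by_contra hc
  push_neg at hc
  obtain ⟨d, hcd, hdx⟩ := EReal.exists_between_coe_real hc
  have hcd' : c < d := by exact_mod_cast hcd
  have := h (d - c) (by linarith)
  rw [show c + (d - c) = d by ring] at this
  exact absurd (lt_of_le_of_lt this hdx) (lt_irrefl _)

lemma EReal_coe_le_of_forall {x : EReal} {c : ℝ} (h : ∀ ε : ℝ, 0 < ε → ((c - ε : ℝ) : EReal) ≤ x) :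
    (c : EReal) ≤ x := by
  by_contra hc
  push_neg at hc
  obtain ⟨d, hxd, hdc⟩ := EReal.exists_between_coe_real hc
  have hdc' : d < c := by exact_mod_cast hdc
  have := h (c - d) (by linarith)
  rw [show c - (c - d) = d by ring] at this
  exact absurd (lt_of_lt_of_le hxd this) (lt_irrefl _)

lemma liminf_le_liminf_of_freq (s t : ℕ → ℝ)
    (H : ∀ c ε : ℝ, 0 < ε → (∃ᶠ n in Filter.atTop, t n < c) → ∃ᶠ n in Filter.atTop, s n < c + ε) :
    Filter.liminf (fun n => ((s n : ℝ) : EReal)) Filter.atTop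
      ≤ Filter.liminf (fun n => ((t n : ℝ) : EReal)) Filter.atTop := by
  by_contra hcon
  push_neg at hcon
  obtain ⟨c, hc1, hc2⟩ := EReal.exists_between_coe_real hcon
  have hfreq : ∃ᶠ n in Filter.atTop, t n < c := by
    have := Filter.frequently_lt_of_liminf_lt (h := hc1)
    exact this.mono fun n hn => by exact_mod_cast hn
  have hle : Filter.liminf (fun n => ((s n : ℝ) : EReal)) Filter.atTop ≤ (c : EReal) := by
    apply EReal_le_coe_of_forall
    intro ε hε
    apply Filter.liminf_le_of_frequently_le'
    exact (H c ε hε hfreq).mono fun n hn => by exact_mod_cast hn.le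
  exact absurd (lt_of_le_of_lt hle hc2) (lt_irrefl _)

lemma limsup_le_limsup_of_freq (s t : ℕ → ℝ)
    (H : ∀ c ε : ℝ, 0 < ε → (∃ᶠ n in Filter.atTop, c < t n) → ∃ᶠ n in Filter.atTop, c - ε < s n) :
    Filter.limsup (fun n => ((t n : ℝ) : EReal)) Filter.atTop
      ≤ Filter.limsup (fun n => ((s n : ℝ) : EReal)) Filter.atTop := by
  by_contra hcon
  push_neg at hcon
  obtain ⟨c, hc1, hc2⟩ := EReal.exists_between_coe_real hcon
  have hfreq : ∃ᶠ n in Filter.atTop, c < t n := by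
    have := Filter.frequently_lt_of_lt_limsup (h := hc2)
    exact this.mono fun n hn => by exact_mod_cast hn
  have hle : (c : EReal) ≤ Filter.limsup (fun n => ((s n : ℝ) : EReal)) Filter.atTop := by
    apply EReal_coe_le_of_forall
    intro ε hε
    have h2 : ∃ᶠ n in Filter.atTop, ((c - ε : ℝ) : EReal) ≤ ((s n : ℝ) : EReal) :=
      (H c ε hε hfreq).mono fun n hn => by exact_mod_cast hn.le
    exact Filter.le_limsup_of_frequently_le' h2
  exact absurd (lt_of_le_of_lt hle hc1) (lt_irrefl _)

open Filter in
lemma ratio_shift (a b : ℝ) (ha : 0 < a) (hb : 0 < b) (u v : ℕ → ℝ)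
    (hu0 : ∀ n, 0 ≤ u n) (hv : ∀ n, 1 ≤ n → 0 < v n) (hvt : Tendsto v atTop atTop) :
    liminf (fun n => (((a + u n) / (b + v n) : ℝ) : EReal)) atTop
      = liminf (fun n => ((u n / v n : ℝ) : EReal)) atTop ∧
    limsup (fun n => (((a + u n) / (b + v n) : ℝ) : EReal)) atTop
      = limsup (fun n => ((u n / v n : ℝ) : EReal)) atTop := by
  set s : ℕ → ℝ := fun n => (a + u n) / (b + v n) with hs
  set t : ℕ → ℝ := fun n => u n / v n with ht
  have htend_a : Tendsto (fun n => a / v n) atTop (𝓝 0) := tendsto_const_nhds.div_atTop hvt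
  have htend_b : Tendsto (fun n => b / v n) atTop (𝓝 0) := tendsto_const_nhds.div_atTop hvt
  have htend_cb : ∀ c : ℝ, Tendsto (fun n => c * (b / v n)) atTop (𝓝 0) := by
    intro c
    have := htend_b.const_mul c
    simpa using this
  have hev : ∀ᶠ n in atTop, 0 < v n ∧ 0 ≤ s n ∧ 0 ≤ t n ∧
      s n ≤ t n + a / v n ∧ t n ≤ s n + s n * (b / v n) ∧ t n * (1 - b / v n) ≤ s n := by
    filter_upwards [eventually_ge_atTop 1] with n hn
    have hvn : 0 < v n := hv n hn
    have hbv : 0 < b + v n := by linarith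
    have hun := hu0 n
    have hs0 : 0 ≤ s n := div_nonneg (by linarith) hbv.le
    have ht0 : 0 ≤ t n := div_nonneg hun hvn.le
    refine ⟨hvn, hs0, ht0, ?_, ?_, ?_⟩
    · -- s n ≤ t n + a / v n
      have h1 : s n ≤ (a + u n) / v n := by
        apply div_le_div_of_nonneg_left (by linarith) hvn
        linarith
      have h2 : (a + u n) / v n = u n / v n + a / v n := by ring
      rw [hs, ht]
      calc (a + u n) / (b + v n) ≤ (a + u n) / v n := h1
      _ = u n / v n + a / v n := h2
    · -- t n ≤ s n + s n * (b / v n)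
      have hsn : s n * (b + v n) = a + u n := div_mul_cancel₀ _ hbv.ne'
      have h1 : u n ≤ s n * (b + v n) := by rw [hsn]; linarith
      have h2 : t n ≤ (s n * (b + v n)) / v n := by
        rw [ht]
        exact div_le_div_of_nonneg_right h1 hvn.le
      have h3 : (s n * (b + v n)) / v n = s n + s n * (b / v n) := by
        field_simp
        ring
      linarith [h2, h3.le, h3.ge]
    · -- t n * (1 - b / v n) ≤ s n
      have h1 : u n / (b + v n) ≤ s n := by
        rw [hs]
        apply div_le_div_of_nonneg_right (by linarith) hbv.le
      have h2 : t n * v n = u n := div_mul_cancel₀ _ hvn.ne'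
      have h3 : t n * (v n / (b + v n)) = u n / (b + v n) := by
        rw [mul_div_assoc'] at *
        rw [h2]
      have h4 : 1 - b / v n ≤ v n / (b + v n) := by
        have h5 : v n / (b + v n) = 1 - b / (b + v n) := by field_simp; ring
        have h6 : b / (b + v n) ≤ b / v n := by
          apply div_le_div_of_nonneg_left hb.le hvn
          linarith
        linarith
      calc t n * (1 - b / v n) ≤ t n * (v n / (b + v n)) :=
            mul_le_mul_of_nonneg_left h4 ht0
      _ = u n / (b + v n) := h3
      _ ≤ s n := h1
  constructor
  · apply le_antisymm
    · -- liminf s ≤ liminf t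
      apply liminf_le_liminf_of_freq
      intro c ε hε hfreq
      have hevε : ∀ᶠ n in atTop, a / v n < ε := htend_a.eventually_lt_const hε
      apply (hfreq.and_eventually (hevε.and hev)).mono
      rintro n ⟨hn1, hn2, _, _, _, hn3, _, _⟩
      linarith
    · -- liminf t ≤ liminf s
      apply liminf_le_liminf_of_freq
      intro c ε hε hfreq
      have hevε : ∀ᶠ n in atTop, c * (b / v n) < ε := (htend_cb c).eventually_lt_const hε
      have hevb : ∀ᶠ n in atTop, 0 ≤ b / v n :=
        hev.mono fun n hn => div_nonneg hb.le hn.1.le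
      apply (hfreq.and_eventually (hevε.and (hevb.and hev))).mono
      rintro n ⟨hn1, hn2, hn3, _, _, _, _, hn4, _⟩
      have : s n * (b / v n) ≤ c * (b / v n) := mul_le_mul_of_nonneg_right hn1.le hn3
      linarith
  · apply le_antisymm
    · -- limsup s ≤ limsup t
      apply limsup_le_limsup_of_freq
      intro c ε hε hfreq
      have hevε : ∀ᶠ n in atTop, a / v n < ε := htend_a.eventually_lt_const hε
      apply (hfreq.and_eventually (hevε.and hev)).mono
      rintro n ⟨hn1, hn2, _, _, _, hn3, _, _⟩
      linarith
    · -- limsup t ≤ limsup s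
      apply limsup_le_limsup_of_freq
      intro c ε hε hfreq
      by_cases hc : c ≤ 0
      · have : ∀ᶠ n in atTop, c - ε < s n := hev.mono fun n hn => by
          have := hn.2.1
          linarith
        exact this.frequently
      · push_neg at hc
        have hevε : ∀ᶠ n in atTop, c * (b / v n) < ε := (htend_cb c).eventually_lt_const hε
        have hevb1 : ∀ᶠ n in atTop, b / v n < 1 := htend_b.eventually_lt_const one_pos
        apply (hfreq.and_eventually (hevε.and (hevb1.and hev))).mono
        rintro n ⟨hn1, hn2, hn3, _, _, hnt, _, _, hn4⟩
        have h1 : c * (1 - b / v n) ≤ t n * (1 - b / v n) :=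
          mul_le_mul_of_nonneg_right hn1.le (by linarith)
        have h2 : c * (1 - b / v n) = c - c * (b / v n) := by ring
        linarith

end Ratio
section Comp

variable {X : Type*} [MeasurableSpace X] {μ : Measure X} {T : X → X}

lemma ratio_comp (T : X → X) (f g : X → ℝ) (hfpos : ∀ y, 0 < f y) (hgpos : ∀ y, 0 < g y)
    (x : X) (hx : Tendsto (fun n => birkhoff T g n x) atTop atTop) :
    (liminf (fun n => ((birkhoff T f n (T x) / birkhoff T g n (T x) : ℝ) : EReal)) atTop
      = liminf (fun n => ((birkhoff T f n x / birkhoff T g n x : ℝ) : EReal)) atTop) ∧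
    (limsup (fun n => ((birkhoff T f n (T x) / birkhoff T g n (T x) : ℝ) : EReal)) atTop
      = limsup (fun n => ((birkhoff T f n x / birkhoff T g n x : ℝ) : EReal)) atTop) := by
  have hshift : ∀ n, birkhoff T f (n + 1) x / birkhoff T g (n + 1) x
      = (f x + birkhoff T f n (T x)) / (g x + birkhoff T g n (T x)) := fun n => by
    rw [birkhoff_succ', birkhoff_succ']
  have hvt : Tendsto (fun n => birkhoff T g n (T x)) atTop atTop := by
    have h1 : Tendsto (fun n => birkhoff T g (n + 1) x) atTop atTop :=
      hx.comp (tendsto_add_atTop_nat 1)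
    have h2 : (fun n => birkhoff T g n (T x)) = fun n => birkhoff T g (n + 1) x + (- g x) :=
      funext fun n => by rw [birkhoff_succ']; ring
    rw [h2]
    exact tendsto_atTop_add_const_right _ _ h1
  obtain ⟨h1, h2⟩ := ratio_shift (f x) (g x) (hfpos x) (hgpos x)
    (fun n => birkhoff T f n (T x)) (fun n => birkhoff T g n (T x))
    (fun n => birkhoff_nonneg (fun y => (hfpos y).le) n (T x))
    (fun n hn => birkhoff_pos hgpos hn (T x)) hvt
  have hfun : (fun i : ℕ => ((birkhoff T f (i + 1) x / birkhoff T g (i + 1) x : ℝ) : EReal))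
      = fun i => (((f x + birkhoff T f i (T x)) / (g x + birkhoff T g i (T x)) : ℝ) : EReal) :=
    funext fun i => by rw [hshift i]
  constructor
  · rw [← Filter.liminf_nat_add (fun n => ((birkhoff T f n x / birkhoff T g n x : ℝ) : EReal)) 1,
      hfun, h1]
  · rw [← Filter.limsup_nat_add (fun n => ((birkhoff T f n x / birkhoff T g n x : ℝ) : EReal)) 1,
      hfun, h2]

end Comp

section Sides

variable {X : Type*} [MeasurableSpace X] {μ : Measure X} {T : X → X}

lemma side_liminf (hT : MeasurePreserving T μ μ) (hcons : IsConservative T μ)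
    (herg : ∀ A : Set X, MeasurableSet A → T ⁻¹' A = A → μ A = 0 ∨ μ Aᶜ = 0)
    {f g : X → ℝ} (hfm : Measurable f) (hgm : Measurable g)
    (hfi : Integrable f μ) (hgi : Integrable g μ)
    (hfpos : ∀ y, 0 < f y) (hgpos : ∀ y, 0 < g y) (hμ : μ ≠ 0)
    (c : ℝ) (hc : c * ∫ x, g x ∂μ < ∫ x, f x ∂μ) :
    ∀ᵐ x ∂μ, (c : EReal) ≤
      liminf (fun n => ((birkhoff T f n x / birkhoff T g n x : ℝ) : EReal)) atTop := by
  have hTm : Measurable T := hT.measurable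
  set L : X → EReal :=
    fun x => liminf (fun n => ((birkhoff T f n x / birkhoff T g n x : ℝ) : EReal)) atTop with hL
  have hLmeas : Measurable L :=
    Measurable.liminf fun n => measurable_coe_real_ereal.comp
      ((birkhoff_measurable hTm hfm n).div (birkhoff_measurable hTm hgm n))
  set D : Set X := {x | L x < (c : EReal)} with hD
  have hDmeas : MeasurableSet D := measurableSet_lt hLmeas measurable_const
  -- D is a.e. invariant
  have hWae := birkhoff_tendsto_atTop hT hcons herg hgm hgi hgpos hμ
  have hsym : μ ((T ⁻¹' D) ∆ D) = 0 := by
    apply measure_mono_null (t := {x | ¬ Tendsto (fun n => birkhoff T g n x) atTop atTop})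
    · intro x hx
      simp only [Set.mem_setOf_eq]
      intro hten
      have heq : L (T x) = L x := (ratio_comp T f g hfpos hgpos x hten).1
      rcases Set.mem_symmDiff.mp hx with ⟨h1, h2⟩ | ⟨h1, h2⟩
      · exact h2 (by rwa [hD, Set.mem_setOf_eq, ← heq])
      · exact h2 (by rwa [Set.mem_preimage, hD, Set.mem_setOf_eq, heq])
    · rw [← ae_iff] at *
      exact hWae
  rcases ae_invariant_zero_or_compl hT herg hDmeas hsym with hD0 | hDc
  · -- μ D = 0, done
    have : ∀ᵐ x ∂μ, x ∉ D := by rw [ae_iff]; simpa using hD0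
    filter_upwards [this] with x hx
    rw [hD, Set.mem_setOf_eq] at hx
    exact not_lt.mp hx
  · -- μ Dᶜ = 0 leads to a contradiction via the maximal ergodic lemma
    exfalso
    set h : X → ℝ := fun y => c * g y - f y with hh
    set E : Set X := {x | ∃ n, 1 ≤ n ∧ 0 < birkhoff T h n x} with hE
    have hDE : D ⊆ E := by
      intro x hx
      rw [hD, Set.mem_setOf_eq, hL] at hx
      have hfreq := Filter.frequently_lt_of_liminf_lt (h := hx)
      obtain ⟨n, hlt, hn1⟩ := (hfreq.and_eventually (eventually_ge_atTop 1)).exists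
      have hlt' : birkhoff T f n x / birkhoff T g n x < c := by exact_mod_cast hlt
      have hgpos' : 0 < birkhoff T g n x := birkhoff_pos hgpos hn1 x
      have : birkhoff T f n x < c * birkhoff T g n x := (div_lt_iff₀ hgpos').mp hlt'
      refine ⟨n, hn1, ?_⟩
      have hlin : birkhoff T h n x = c * birkhoff T g n x - birkhoff T f n x := by
        rw [hh, show (fun y => c * g y - f y) = fun y => (fun z => c * g z) y - f y from rfl,
          birkhoff_sub, birkhoff_const_mul]
      rw [hlin]
      linarith
    have hEc : μ Eᶜ = 0 :=
      measure_mono_null (Set.compl_subset_compl.mpr hDE) hDc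
    have hhm : Measurable h := (hgm.const_mul c).sub hfm
    have hhi : Integrable h μ := (hgi.const_mul c).sub hfi
    have hmax := maximal_ergodic hT hhm hhi
    rw [← hE] at hmax
    have hEuniv : E =ᵐ[μ] Set.univ := ae_eq_univ.mpr hEc
    rw [setIntegral_congr_set hEuniv, setIntegral_univ] at hmax
    have hint : ∫ x, h x ∂μ = c * ∫ x, g x ∂μ - ∫ x, f x ∂μ := by
      rw [hh]
      rw [integral_sub (hgi.const_mul c) hfi, integral_const_mul]
    rw [hint] at hmax
    linarith

lemma side_limsup (hT : MeasurePreserving T μ μ) (hcons : IsConservative T μ)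
    (herg : ∀ A : Set X, MeasurableSet A → T ⁻¹' A = A → μ A = 0 ∨ μ Aᶜ = 0)
    {f g : X → ℝ} (hfm : Measurable f) (hgm : Measurable g)
    (hfi : Integrable f μ) (hgi : Integrable g μ)
    (hfpos : ∀ y, 0 < f y) (hgpos : ∀ y, 0 < g y) (hμ : μ ≠ 0)
    (c : ℝ) (hc : (∫ x, f x ∂μ) < c * ∫ x, g x ∂μ) :
    ∀ᵐ x ∂μ, limsup (fun n => ((birkhoff T f n x / birkhoff T g n x : ℝ) : EReal)) atTop
      ≤ (c : EReal) := by
  have hTm : Measurable T := hT.measurable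
  set L : X → EReal :=
    fun x => limsup (fun n => ((birkhoff T f n x / birkhoff T g n x : ℝ) : EReal)) atTop with hL
  have hLmeas : Measurable L :=
    Measurable.limsup fun n => measurable_coe_real_ereal.comp
      ((birkhoff_measurable hTm hfm n).div (birkhoff_measurable hTm hgm n))
  set D : Set X := {x | (c : EReal) < L x} with hD
  have hDmeas : MeasurableSet D := measurableSet_lt measurable_const hLmeas
  have hWae := birkhoff_tendsto_atTop hT hcons herg hgm hgi hgpos hμ
  have hsym : μ ((T ⁻¹' D) ∆ D) = 0 := by
    apply measure_mono_null (t := {x | ¬ Tendsto (fun n => birkhoff T g n x) atTop atTop})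
    · intro x hx
      simp only [Set.mem_setOf_eq]
      intro hten
      have heq : L (T x) = L x := (ratio_comp T f g hfpos hgpos x hten).2
      rcases Set.mem_symmDiff.mp hx with ⟨h1, h2⟩ | ⟨h1, h2⟩
      · exact h2 (by rwa [hD, Set.mem_setOf_eq, ← heq])
      · exact h2 (by rwa [Set.mem_preimage, hD, Set.mem_setOf_eq, heq])
    · rw [← ae_iff] at *
      exact hWae
  rcases ae_invariant_zero_or_compl hT herg hDmeas hsym with hD0 | hDc
  · have : ∀ᵐ x ∂μ, x ∉ D := by rw [ae_iff]; simpa using hD0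
    filter_upwards [this] with x hx
    rw [hD, Set.mem_setOf_eq] at hx
    exact not_lt.mp hx
  · exfalso
    set h : X → ℝ := fun y => f y - c * g y with hh
    set E : Set X := {x | ∃ n, 1 ≤ n ∧ 0 < birkhoff T h n x} with hE
    have hDE : D ⊆ E := by
      intro x hx
      rw [hD, Set.mem_setOf_eq, hL] at hx
      have hfreq := Filter.frequently_lt_of_lt_limsup (h := hx)
      obtain ⟨n, hlt, hn1⟩ := (hfreq.and_eventually (eventually_ge_atTop 1)).exists
      have hlt' : c < birkhoff T f n x / birkhoff T g n x := by exact_mod_cast hlt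
      have hgpos' : 0 < birkhoff T g n x := birkhoff_pos hgpos hn1 x
      have : c * birkhoff T g n x < birkhoff T f n x := (lt_div_iff₀ hgpos').mp hlt'
      refine ⟨n, hn1, ?_⟩
      have hlin : birkhoff T h n x = birkhoff T f n x - c * birkhoff T g n x := by
        rw [hh, show (fun y => f y - c * g y) = fun y => f y - (fun z => c * g z) y from rfl,
          birkhoff_sub, birkhoff_const_mul]
      rw [hlin]
      linarith
    have hEc : μ Eᶜ = 0 :=
      measure_mono_null (Set.compl_subset_compl.mpr hDE) hDc
    have hhm : Measurable h := hfm.sub (hgm.const_mul c)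
    have hhi : Integrable h μ := hfi.sub (hgi.const_mul c)
    have hmax := maximal_ergodic hT hhm hhi
    rw [← hE] at hmax
    have hEuniv : E =ᵐ[μ] Set.univ := ae_eq_univ.mpr hEc
    rw [setIntegral_congr_set hEuniv, setIntegral_univ] at hmax
    have hint : ∫ x, h x ∂μ = (∫ x, f x ∂μ) - c * ∫ x, g x ∂μ := by
      rw [hh]
      rw [integral_sub hfi (hgi.const_mul c), integral_const_mul]
    rw [hint] at hmax
    linarith

end Sides
/-- In the ergodic case with `f, g ∈ L¹` positive a.e., the liminf and limsup of
`Sₙf/Sₙg` are a.e. equal to the constant `(∫f)/(∫g)`; in particular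
`liminf ≥ (∫f)/(∫g) ≥ limsup` a.e. -/
theorem liminf_limsup_eq_const {X : Type*} [MeasurableSpace X] (μ : Measure X)
    [SigmaFinite μ] (T : X → X) (hT : MeasurePreserving T μ μ) (hcons : IsConservative T μ)
    (herg : ∀ A : Set X, MeasurableSet A → T ⁻¹' A = A → μ A = 0 ∨ μ Aᶜ = 0)
    (f g : X → ℝ) (hf : Integrable f μ) (hg : Integrable g μ)
    (hfpos : ∀ᵐ x ∂μ, 0 < f x) (hgpos : ∀ᵐ x ∂μ, 0 < g x) :
    (∀ᵐ x ∂μ,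
      liminf (fun n => ((birkhoff T f n x / birkhoff T g n x : ℝ) : EReal)) atTop
        = (((∫ x, f x ∂μ) / (∫ x, g x ∂μ) : ℝ) : EReal) ∧
      limsup (fun n => ((birkhoff T f n x / birkhoff T g n x : ℝ) : EReal)) atTop
        = (((∫ x, f x ∂μ) / (∫ x, g x ∂μ) : ℝ) : EReal)) ∧
    (∀ᵐ x ∂μ,
      (((∫ x, f x ∂μ) / (∫ x, g x ∂μ) : ℝ) : EReal)
          ≤ liminf (fun n => ((birkhoff T f n x / birkhoff T g n x : ℝ) : EReal)) atTop ∧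
      limsup (fun n => ((birkhoff T f n x / birkhoff T g n x : ℝ) : EReal)) atTop
          ≤ (((∫ x, f x ∂μ) / (∫ x, g x ∂μ) : ℝ) : EReal)) := by
  by_cases hμ : μ = 0
  · subst hμ
    constructor <;> simp [MeasureTheory.ae_zero]
  -- replace f, g by measurable, everywhere-positive representatives
  have hfm0 := hf.1.aemeasurable
  have hgm0 := hg.1.aemeasurable
  set f₀ := hfm0.mk f with hf₀def
  set g₀ := hgm0.mk g with hg₀def
  have hf₀m : Measurable f₀ := hfm0.measurable_mk
  have hg₀m : Measurable g₀ := hgm0.measurable_mk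
  set f' : X → ℝ := fun x => if 0 < f₀ x then f₀ x else 1 with hf'def
  set g' : X → ℝ := fun x => if 0 < g₀ x then g₀ x else 1 with hg'def
  have hf'm : Measurable f' :=
    Measurable.ite (measurableSet_lt measurable_const hf₀m) hf₀m measurable_const
  have hg'm : Measurable g' :=
    Measurable.ite (measurableSet_lt measurable_const hg₀m) hg₀m measurable_const
  have hff' : f =ᵐ[μ] f' := by
    filter_upwards [hfm0.ae_eq_mk, hfpos] with x h1 h2
    have h3 : 0 < f₀ x := by rw [hf₀def, ← h1]; exact h2
    rw [hf'def]
    simp only [if_pos h3]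
    exact h1
  have hgg' : g =ᵐ[μ] g' := by
    filter_upwards [hgm0.ae_eq_mk, hgpos] with x h1 h2
    have h3 : 0 < g₀ x := by rw [hg₀def, ← h1]; exact h2
    rw [hg'def]
    simp only [if_pos h3]
    exact h1
  have hf'pos : ∀ y, 0 < f' y := by
    intro y
    rw [hf'def]
    simp only
    split_ifs with h
    exacts [h, one_pos]
  have hg'pos : ∀ y, 0 < g' y := by
    intro y
    rw [hg'def]
    simp only
    split_ifs with h
    exacts [h, one_pos]
  have hf'i : Integrable f' μ := hf.congr hff'
  have hg'i : Integrable g' μ := hg.congr hgg'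
  have hint_f : ∫ x, f x ∂μ = ∫ x, f' x ∂μ := integral_congr_ae hff'
  have hint_g : ∫ x, g x ∂μ = ∫ x, g' x ∂μ := integral_congr_ae hgg'
  have hf'intpos : 0 < ∫ x, f' x ∂μ := by
    rw [integral_pos_iff_support_of_nonneg (fun y => (hf'pos y).le) hf'i]
    have hsupp : Function.support f' = Set.univ := Set.eq_univ_of_forall fun y => (hf'pos y).ne'
    rw [hsupp]
    exact Measure.measure_univ_pos.mpr hμ
  have hg'intpos : 0 < ∫ x, g' x ∂μ := by
    rw [integral_pos_iff_support_of_nonneg (fun y => (hg'pos y).le) hg'i]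
    have hsupp : Function.support g' = Set.univ := Set.eq_univ_of_forall fun y => (hg'pos y).ne'
    rw [hsupp]
    exact Measure.measure_univ_pos.mpr hμ
  -- birkhoff sums agree a.e.
  have hae_comp : ∀ᵐ x ∂μ, ∀ k : ℕ, f (T^[k] x) = f' (T^[k] x) ∧ g (T^[k] x) = g' (T^[k] x) := by
    rw [MeasureTheory.ae_all_iff]
    intro k
    have h1 : (f ∘ T^[k]) =ᵐ[μ] (f' ∘ T^[k]) :=
      (hT.iterate k).quasiMeasurePreserving.ae_eq_comp hff'
    have h2 : (g ∘ T^[k]) =ᵐ[μ] (g' ∘ T^[k]) :=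
      (hT.iterate k).quasiMeasurePreserving.ae_eq_comp hgg'
    filter_upwards [h1, h2] with x e1 e2
    exact ⟨e1, e2⟩
  have hsums : ∀ᵐ x ∂μ, ∀ n : ℕ,
      birkhoff T f n x = birkhoff T f' n x ∧ birkhoff T g n x = birkhoff T g' n x := by
    filter_upwards [hae_comp] with x hx
    intro n
    constructor
    · exact Finset.sum_congr rfl fun k _ => (hx k).1
    · exact Finset.sum_congr rfl fun k _ => (hx k).2
  -- rational one-sided bounds
  have hQ : ∀ᵐ x ∂μ, ∀ q : ℚ,
      ((q : ℝ) * ∫ x, g' x ∂μ < ∫ x, f' x ∂μ →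
        (((q : ℝ)) : EReal) ≤
          liminf (fun n => ((birkhoff T f' n x / birkhoff T g' n x : ℝ) : EReal)) atTop) ∧
      ((∫ x, f' x ∂μ) < (q : ℝ) * ∫ x, g' x ∂μ →
        limsup (fun n => ((birkhoff T f' n x / birkhoff T g' n x : ℝ) : EReal)) atTop
          ≤ (((q : ℝ)) : EReal)) := by
    rw [MeasureTheory.ae_all_iff]
    intro q
    have h1 : ∀ᵐ x ∂μ, ((q : ℝ) * ∫ x, g' x ∂μ < ∫ x, f' x ∂μ →
        (((q : ℝ)) : EReal) ≤
          liminf (fun n => ((birkhoff T f' n x / birkhoff T g' n x : ℝ) : EReal)) atTop) := by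
      by_cases hq : (q : ℝ) * ∫ x, g' x ∂μ < ∫ x, f' x ∂μ
      · filter_upwards [side_liminf hT hcons herg hf'm hg'm hf'i hg'i hf'pos hg'pos hμ _ hq]
          with x hx
        exact fun _ => hx
      · exact ae_of_all _ fun x h => absurd h hq
    have h2 : ∀ᵐ x ∂μ, ((∫ x, f' x ∂μ) < (q : ℝ) * ∫ x, g' x ∂μ →
        limsup (fun n => ((birkhoff T f' n x / birkhoff T g' n x : ℝ) : EReal)) atTop
          ≤ (((q : ℝ)) : EReal)) := by
      by_cases hq : (∫ x, f' x ∂μ) < (q : ℝ) * ∫ x, g' x ∂μ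
      · filter_upwards [side_limsup hT hcons herg hf'm hg'm hf'i hg'i hf'pos hg'pos hμ _ hq]
          with x hx
        exact fun _ => hx
      · exact ae_of_all _ fun x h => absurd h hq
    filter_upwards [h1, h2] with x a b
    exact ⟨a, b⟩
  rw [hint_f, hint_g]
  have hmain : ∀ᵐ x ∂μ,
      (((∫ x, f' x ∂μ) / (∫ x, g' x ∂μ) : ℝ) : EReal)
        ≤ liminf (fun n => ((birkhoff T f n x / birkhoff T g n x : ℝ) : EReal)) atTop ∧
      limsup (fun n => ((birkhoff T f n x / birkhoff T g n x : ℝ) : EReal)) atTop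
        ≤ (((∫ x, f' x ∂μ) / (∫ x, g' x ∂μ) : ℝ) : EReal) := by
    filter_upwards [hQ, hsums] with x hx hsum
    have hseq : (fun n => ((birkhoff T f n x / birkhoff T g n x : ℝ) : EReal))
        = fun n => ((birkhoff T f' n x / birkhoff T g' n x : ℝ) : EReal) :=
      funext fun n => by rw [(hsum n).1, (hsum n).2]
    rw [hseq]
    constructor
    · by_contra hcon
      push_neg at hcon
      obtain ⟨q, hq1, hq2⟩ := EReal.exists_rat_btwn_of_lt hcon
      have hqR : (q : ℝ) < (∫ x, f' x ∂μ) / (∫ x, g' x ∂μ) := by exact_mod_cast hq2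
      have hmul : (q : ℝ) * ∫ x, g' x ∂μ < ∫ x, f' x ∂μ := (lt_div_iff₀ hg'intpos).mp hqR
      have := (hx q).1 hmul
      exact absurd (lt_of_le_of_lt this hq1) (lt_irrefl _)
    · by_contra hcon
      push_neg at hcon
      obtain ⟨q, hq1, hq2⟩ := EReal.exists_rat_btwn_of_lt hcon
      have hqR : (∫ x, f' x ∂μ) / (∫ x, g' x ∂μ) < (q : ℝ) := by exact_mod_cast hq1
      have hmul : (∫ x, f' x ∂μ) < (q : ℝ) * ∫ x, g' x ∂μ := (div_lt_iff₀ hg'intpos).mp hqR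
      have := (hx q).2 hmul
      exact absurd (lt_of_lt_of_le hq2 this) (lt_irrefl _)
  constructor
  · filter_upwards [hmain] with x hx
    obtain ⟨h1, h2⟩ := hx
    have hle := Filter.liminf_le_limsup
      (f := atTop) (u := fun n => ((birkhoff T f n x / birkhoff T g n x : ℝ) : EReal))
    exact ⟨le_antisymm (hle.trans h2) h1, le_antisymm h2 (h1.trans hle)⟩
  · exact hmain
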